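/- For every natural number b ≥ 1, the polynomial f_b(t) = 2·(t^{2b} + t^{2b-1} + ... + t + 1) + t^b has all of its complex roots on the unit circle. -/

import Mathlib

open Polynomial

private lemma key_sq (w : ℂ) :
    ‖2 * w + 1‖ ^ 2 - ‖2 + w‖ ^ 2
      = 3 * (‖w‖ ^ 2 - 1) := by
  simp only [Complex.sq_norm, Complex.normSq_apply, Complex.add_re, Complex.add_im,
    Complex.mul_re, Complex.mul_im, Complex.one_re, Complex.one_im,
    Complex.re_ofNat, Complex.im_ofNat]
  ring

/-- For every `b ≥ 1`, the polynomial `f_b(t) = 2·∑_{i=0}^{2b} t^i + t^b`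
has all of its complex roots on the unit circle. -/
theorem stmt_0 (b : ℕ) (hb : 1 ≤ b) (z : ℂ)
    (hz : (2 * ∑ i ∈ Finset.range (2 * b + 1), (X : ℂ[X]) ^ i + X ^ b).IsRoot z) :
    ‖z‖ = 1 := by
  have heval : 2 * (∑ i ∈ Finset.range (2 * b + 1), z ^ i) + z ^ b = 0 := by
    simpa [Polynomial.IsRoot, Polynomial.eval_finset_sum] using hz
  have hz1 : z ≠ 1 := by
    rintro rfl
    simp only [one_pow, Finset.sum_const, Finset.card_range, nsmul_eq_mul, mul_one] at heval
    have hnat : ((2 * (2 * b + 1) + 1 : ℕ) : ℂ) = 0 := by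
      push_cast at heval ⊢
      linear_combination heval
    have : 2 * (2 * b + 1) + 1 = 0 := Nat.cast_eq_zero.mp hnat
    omega
  have hgeom : (∑ i ∈ Finset.range (2 * b + 1), z ^ i) * (z - 1) = z ^ (2 * b + 1) - 1 :=
    geom_sum_mul z (2 * b + 1)
  have hkey : 2 * z ^ (2 * b + 1) + z ^ (b + 1) = 2 + z ^ b := by
    have h0 : (2 * (∑ i ∈ Finset.range (2 * b + 1), z ^ i) + z ^ b) * (z - 1) = 0 := by
      rw [heval]; ring
    have h1 : 2 * (z ^ (2 * b + 1) - 1) + z ^ b * (z - 1) = 0 := by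
      calc 2 * (z ^ (2 * b + 1) - 1) + z ^ b * (z - 1)
          = 2 * ((∑ i ∈ Finset.range (2 * b + 1), z ^ i) * (z - 1)) + z ^ b * (z - 1) := by
            rw [hgeom]
        _ = (2 * (∑ i ∈ Finset.range (2 * b + 1), z ^ i) + z ^ b) * (z - 1) := by ring
        _ = 0 := h0
    have h2 : z ^ (b + 1) = z ^ b * z := pow_succ z b
    linear_combination h1 + h2
  set r := ‖z‖ with hr
  have e1 : z ^ (b + 1) * z ^ b = z ^ (2 * b + 1) := by
    rw [← pow_add]; congr 1; omega
  have habs : r ^ (b + 1) * ‖2 * z ^ b + 1‖ = ‖2 + z ^ b‖ := by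
    have hfac : z ^ (b + 1) * (2 * z ^ b + 1) = 2 + z ^ b := by
      linear_combination 2 * e1 + hkey
    calc r ^ (b + 1) * ‖2 * z ^ b + 1‖
        = ‖z ^ (b + 1) * (2 * z ^ b + 1)‖ := by
          rw [norm_mul, norm_pow]
      _ = _ := by rw [hfac]
  have hwr : ‖z ^ b‖ = r ^ b := by rw [norm_pow]
  have hsq := key_sq (z ^ b)
  rw [hwr] at hsq
  have hr0 : 0 ≤ r := norm_nonneg z
  have hA := norm_nonneg (2 * z ^ b + 1)
  have hB := norm_nonneg (2 + z ^ b)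
  rcases lt_trichotomy r 1 with h | h | h
  · exfalso
    have hwlt : r ^ b < 1 := pow_lt_one₀ hr0 h (by omega)
    have hsq' : ‖2 * z ^ b + 1‖ ^ 2 < ‖2 + z ^ b‖ ^ 2 := by
      nlinarith [pow_nonneg hr0 b]
    have h1 : ‖2 * z ^ b + 1‖ < ‖2 + z ^ b‖ :=
      lt_of_pow_lt_pow_left₀ 2 hB hsq'
    have h2 : r ^ (b + 1) ≤ 1 := pow_le_one₀ hr0 h.le
    have h3 : r ^ (b + 1) * ‖2 * z ^ b + 1‖ ≤ ‖2 * z ^ b + 1‖ :=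
      mul_le_of_le_one_left hA h2
    linarith
  · exact h
  · exfalso
    have hwgt : 1 < r ^ b := one_lt_pow₀ h (by omega)
    have hsq' : ‖2 + z ^ b‖ ^ 2 < ‖2 * z ^ b + 1‖ ^ 2 := by
      nlinarith
    have h1 : ‖2 + z ^ b‖ < ‖2 * z ^ b + 1‖ :=
      lt_of_pow_lt_pow_left₀ 2 hA hsq'
    have h2 : 1 < r ^ (b + 1) := one_lt_pow₀ h (by omega)
    have hApos : 0 < ‖2 * z ^ b + 1‖ := lt_of_le_of_lt hB h1
    have h3 : ‖2 * z ^ b + 1‖ < r ^ (b + 1) * ‖2 * z ^ b + 1‖ :=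
      (lt_mul_iff_one_lt_left hApos).mpr h2
    linarith
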